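/- With Ψ(u; s₁,…,s_d) the nonnegative kernel such that J_d(s₁,…,s_d; φ) = ∫_{s₁}^{s_d} φ^{(d)}(u) Ψ(u) du for all φ ∈ C^d (Lemma above), one has ∫_{s₁}^{s_d} Ψ(u) du = c_d · V(s₁,…,s_d), where c_d = (2! · 3! ⋯ (d−1)!)^{−1} and V is the Vandermonde product ∏_{1≤i<j≤d}(s_j − s_i). -/

import Mathlib

open MeasureTheory

/-- The matrix whose `j`-th column is `(1, s_j, s_j²/2!, …, s_j^{m-2}/(m-2)!, φ'(s_j))ᵀ`. -/
noncomputable def Jmat (m : ℕ) (s : Fin m → ℝ) (φ : ℝ → ℝ) : Matrix (Fin m) (Fin m) ℝ :=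
  Matrix.of fun i j =>
    if i.val < m - 1 then s j ^ i.val / (Nat.factorial i.val) else deriv φ (s j)

/-- The generalized Vandermonde-type determinant `J_m(s₁,…,s_m; φ)`. -/
noncomputable def Jdet (m : ℕ) (s : Fin m → ℝ) (φ : ℝ → ℝ) : ℝ := (Jmat m s φ).det

lemma iteratedDeriv_pow_aux (c : ℝ) (m n : ℕ) :
    iteratedDeriv n (fun x : ℝ => c * x ^ m) = fun x => c * (m.descFactorial n : ℝ) * x ^ (m - n) := by
  induction n with
  | zero => simp
  | succ n ih =>
    rw [iteratedDeriv_succ, ih]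
    funext x
    rw [deriv_const_mul _ (differentiable_pow _ |>.differentiableAt), deriv_pow_field,
      Nat.descFactorial_succ, show m - (n + 1) = m - n - 1 from by omega]
    push_cast
    ring

theorem stmt9 (d : ℕ) (hd : 2 ≤ d) (s : Fin d → ℝ) (hs : StrictMono s) (Ψ : ℝ → ℝ)
    (hΨ : ∀ u ∈ Set.Icc (s ⟨0, by omega⟩) (s ⟨d - 1, by omega⟩), 0 ≤ Ψ u)
    (hrep : ∀ φ : ℝ → ℝ, ContDiff ℝ (d : ℕ∞) φ →
      Jdet d s φ =
        ∫ u in (s ⟨0, by omega⟩)..(s ⟨d - 1, by omega⟩), iteratedDeriv d φ u * Ψ u) :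
    (∫ u in (s ⟨0, by omega⟩)..(s ⟨d - 1, by omega⟩), Ψ u)
      = ((∏ k ∈ Finset.Icc 2 (d - 1), (Nat.factorial k : ℝ)))⁻¹ *
          ∏ i : Fin d, ∏ j ∈ Finset.Ioi i, (s j - s i) := by
  set φ : ℝ → ℝ := fun t => ((d.factorial : ℝ))⁻¹ * t ^ d with hφ
  have hsmooth : ContDiff ℝ (d : ℕ∞) φ := (contDiff_const.mul (contDiff_id.pow d))
  have hiter : ∀ u : ℝ, iteratedDeriv d φ u = 1 := by
    intro u
    rw [hφ, iteratedDeriv_pow_aux]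
    simp [Nat.descFactorial_self, Nat.sub_self]
    rw [inv_mul_cancel₀ (by exact_mod_cast d.factorial_ne_zero)]
  have hderiv : ∀ x : ℝ, deriv φ x = x ^ (d - 1) / (d - 1).factorial := by
    intro x
    rw [hφ, deriv_const_mul _ (differentiable_pow _ |>.differentiableAt), deriv_pow_field]
    rw [div_eq_inv_mul, ← mul_assoc]
    congr 1
    have : (d.factorial : ℝ) = d * (d - 1).factorial := by
      exact_mod_cast (Nat.mul_factorial_pred (by omega : d ≠ 0)).symm
    rw [this, mul_inv, mul_assoc, mul_comm _ (d : ℝ), ← mul_assoc,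
      inv_mul_cancel₀ (by positivity), one_mul]
  have hmat : Jmat d s φ = Matrix.of fun i j : Fin d =>
      ((i : ℕ).factorial : ℝ)⁻¹ * s j ^ (i : ℕ) := by
    ext i j
    simp only [Jmat, Matrix.of_apply]
    rcases lt_or_ge (i : ℕ) (d - 1) with h | h
    · rw [if_pos h, div_eq_inv_mul]
    · have hi : (i : ℕ) = d - 1 := by omega
      rw [if_neg (by omega), hderiv, hi, div_eq_inv_mul]
  have hJ : Jdet d s φ = (∏ i : Fin d, ((i : ℕ).factorial : ℝ))⁻¹ *
      ∏ i : Fin d, ∏ j ∈ Finset.Ioi i, (s j - s i) := by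
    rw [Jdet, hmat]
    have : (Matrix.of fun i j : Fin d => ((i : ℕ).factorial : ℝ)⁻¹ * s j ^ (i : ℕ))
        = Matrix.diagonal (fun i : Fin d => ((i : ℕ).factorial : ℝ)⁻¹) *
          Matrix.transpose (Matrix.vandermonde s) := by
      ext i j
      simp [Matrix.diagonal_mul, Matrix.transpose_apply, Matrix.vandermonde_apply]
    rw [this, Matrix.det_mul, Matrix.det_transpose, Matrix.det_vandermonde,
      Matrix.det_diagonal, ← Finset.prod_inv_distrib]
  have hfac : (∏ i : Fin d, ((i : ℕ).factorial : ℝ))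
      = ∏ k ∈ Finset.Icc 2 (d - 1), (Nat.factorial k : ℝ) := by
    rw [Fin.prod_univ_eq_prod_range (fun k => ((Nat.factorial k : ℝ)))]
    symm
    apply Finset.prod_subset
    · intro k hk
      simp only [Finset.mem_Icc] at hk
      simp only [Finset.mem_range]; omega
    · intro k hk hk'
      simp only [Finset.mem_range] at hk
      simp only [Finset.mem_Icc, not_and_or, not_le] at hk'
      have hk1 : k ≤ 1 := by omega
      interval_cases k <;> simp
  have := hrep φ hsmooth
  simp only [hiter, one_mul] at this
  rw [← this, hJ, hfac]
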